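/- Let G be a group acting on a set X, let x₀ ∈ X with stabilizer H = {g ∈ G : g·x₀ = x₀}, and fix coset representatives k_x ∈ G with k_x·x₀ = x and k_{x₀} = e. Let ψ : H × H → ℂˣ be a function, β : G × G → ℂˣ a 2-cocycle on G, and γ : G × X → ℂˣ such that for all g₁,g₂ ∈ G and x ∈ X, ψ(k⁻¹_{g₁g₂x}·g₁·k_{g₁x}, k⁻¹_{g₂x}·g₂·k_x) = β(g₁,g₂) · γ(g₁g₂, x) / (γ(g₁, g₂x)·γ(g₂, x)). Then Ψ : G × G → ℂˣ defined by Ψ(g₁,g₂) := β(g₁,g₂)·γ(g₁g₂, x₀)/(γ(g₁,x₀)·γ(g₂,x₀)) is a 2-cocycle on G whose restriction to H × H equals ψ; in particular ψ is a 2-cocycle on H that extends to G. -/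

import Mathlib

/-- Converse direction of Proposition 13: if the L-symbols labeled by `(H,ψ)` are
trivializable by a gauge `(β,γ)` (block independence), then
`Ψ(g₁,g₂) = β(g₁,g₂)·γ(g₁g₂,x₀)/(γ(g₁,x₀)γ(g₂,x₀))` is a 2-cocycle on `G` whose
restriction to the stabilizer `H` of `x₀` equals `ψ`; in particular `ψ` is a
2-cocycle on `H` that extends to `G`. -/
theorem psi_extends_to_G
    {G : Type*} [Group G] {X : Type*} [MulAction G X]
    (x₀ : X) (k : X → G)
    (hk : ∀ x : X, k x • x₀ = x) (hk₀ : k x₀ = 1)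
    (ψ : G → G → ℂˣ) (β : G → G → ℂˣ) (γ : G → X → ℂˣ)
    (hβ : ∀ g h l : G, β g h * β (g * h) l = β g (h * l) * β h l)
    (hmain : ∀ (g₁ g₂ : G) (x : X),
      ψ ((k (g₁ • g₂ • x))⁻¹ * g₁ * k (g₁ • x)) ((k (g₂ • x))⁻¹ * g₂ * k x) =
        β g₁ g₂ * γ (g₁ * g₂) x / (γ g₁ (g₂ • x) * γ g₂ x))
    (Ψ : G → G → ℂˣ)
    (hΨ : ∀ g₁ g₂ : G, Ψ g₁ g₂ = β g₁ g₂ * γ (g₁ * g₂) x₀ / (γ g₁ x₀ * γ g₂ x₀)) :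
    (∀ g h l : G, Ψ g h * Ψ (g * h) l = Ψ g (h * l) * Ψ h l) ∧
    (∀ h₁ h₂ : G, h₁ ∈ MulAction.stabilizer G x₀ → h₂ ∈ MulAction.stabilizer G x₀ →
      Ψ h₁ h₂ = ψ h₁ h₂) ∧
    (∀ h₁ h₂ h₃ : G, h₁ ∈ MulAction.stabilizer G x₀ →
      h₂ ∈ MulAction.stabilizer G x₀ → h₃ ∈ MulAction.stabilizer G x₀ →
      ψ h₁ h₂ * ψ (h₁ * h₂) h₃ = ψ h₁ (h₂ * h₃) * ψ h₂ h₃) := by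
  have hcoc : ∀ g h l : G, Ψ g h * Ψ (g * h) l = Ψ g (h * l) * Ψ h l := by
    intro g h l
    have hb := congrArg (Units.val) (hβ g h l)
    push_cast at hb
    apply Units.ext
    simp only [hΨ]
    rw [mul_assoc g h l]
    push_cast
    field_simp
    ring_nf
    ring_nf at hb
    linear_combination hb
  have hrestr : ∀ h₁ h₂ : G, h₁ ∈ MulAction.stabilizer G x₀ →
      h₂ ∈ MulAction.stabilizer G x₀ → Ψ h₁ h₂ = ψ h₁ h₂ := by
    intro h₁ h₂ m₁ m₂
    have e₁ : h₁ • x₀ = x₀ := m₁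
    have e₂ : h₂ • x₀ = x₀ := m₂
    have := hmain h₁ h₂ x₀
    rw [e₂, e₁, hk₀] at this
    simp only [inv_one, one_mul, mul_one] at this
    rw [hΨ, this]
  refine ⟨hcoc, hrestr, ?_⟩
  intro h₁ h₂ h₃ m₁ m₂ m₃
  have m₁₂ := mul_mem m₁ m₂
  have m₂₃ := mul_mem m₂ m₃
  rw [← hrestr h₁ h₂ m₁ m₂, ← hrestr (h₁*h₂) h₃ m₁₂ m₃,
    ← hrestr h₁ (h₂*h₃) m₁ m₂₃, ← hrestr h₂ h₃ m₂ m₃]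
  exact hcoc h₁ h₂ h₃
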